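/- Let $\eta > 0$, and for $j = 1, 2$ let $k_j > 0$, $\varepsilon_j > 0$. Let $v_1, v_2 : [0,1] \to \mathbb{C}$ be twice continuously differentiable solutions of $v_j'' + k_j^2 v_j = 0$ on $(0,1)$ in a 1D two-interval model, satisfying at the common point $x = c \in (0,1)$ (with $v_1$ on $[0,c]$, $v_2$ on $[c,1]$): $\varepsilon_1^{-1} v_1'(c) + i\eta v_1(c) = \varepsilon_2^{-1}(-v_2'(c)) - i\eta v_2(c)$ and $\varepsilon_1^{-1} v_1'(c) - i\eta v_1(c) = \varepsilon_2^{-1}(-v_2'(c)) + i\eta v_2(c)$, together with zero impedance conditions $-\varepsilon_1^{-1} v_1'(0) - i\eta v_1(0) = 0$ and $\varepsilon_2^{-1} v_2'(1) - i\eta v_2(1) = 0$. Then $v_1 \equiv 0$ and $v_2 \equiv 0$. -/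

import Mathlib

open Set Complex Filter

lemma const_on_Icc_of_deriv_zero {f : ℝ → ℂ} {a b : ℝ} (hab : a < b)
    (hf : ContinuousOn f (Icc a b))
    (hd : ∀ x ∈ Ioo a b, HasDerivAt f 0 x) :
    ∀ x ∈ Icc a b, ∀ y ∈ Icc a b, f x = f y := by
  set m := (a + b) / 2 with hm
  have hmab : m ∈ Ioo a b := ⟨by simp only [hm]; linarith, by simp only [hm]; linarith⟩
  have hIoo : ∀ x ∈ Ioo a b, f x = f m := by
    have pair : ∀ x ∈ Ioo a b, ∀ y ∈ Ioo a b, x ≤ y → f y = f x := by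
      intro x hx y hy hxy
      have := constant_of_has_deriv_right_zero (f := f) (a := x) (b := y)
        (hf.mono (Icc_subset_Icc hx.1.le hy.2.le))
        (fun t ht => (hd t ⟨lt_of_lt_of_le hx.1 ht.1, lt_of_le_of_lt ht.2.le hy.2⟩).hasDerivWithinAt)
      exact this y (right_mem_Icc.2 hxy)
    intro x hx
    rcases le_total x m with h | h
    · exact (pair x hx m hmab h).symm
    · exact pair m hmab x hx h
  have hlim : ∀ x ∈ Icc a b, f x = f m := by
    intro x hx
    have hne : (nhdsWithin x (Ioo a b)).NeBot := by
      rw [← mem_closure_iff_nhdsWithin_neBot, closure_Ioo hab.ne]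
      exact hx
    have h1 : Tendsto f (nhdsWithin x (Ioo a b)) (nhds (f x)) :=
      (hf x hx).mono_left (nhdsWithin_mono _ Ioo_subset_Icc_self)
    have h2 : Tendsto f (nhdsWithin x (Ioo a b)) (nhds (f m)) := by
      refine Tendsto.congr' ?_ tendsto_const_nhds
      filter_upwards [self_mem_nhdsWithin] with t ht
      exact (hIoo t ht).symm
    exact tendsto_nhds_unique h1 h2
  intro x hx y hy; rw [hlim x hx, hlim y hy]

lemma ode_rep {a b x₀ k : ℝ} (hk : 0 < k) (hab : a < b) (hx₀ : x₀ ∈ Icc a b)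
    {v : ℝ → ℂ} (hv : ContDiffOn ℝ 2 v (Icc a b))
    (heq : ∀ x ∈ Ioo a b, iteratedDerivWithin 2 v (Icc a b) x + (k:ℂ)^2 * v x = 0) :
    ∀ x ∈ Icc a b,
      (k:ℂ) * v x = (k:ℂ) * v x₀ * Complex.cos ((k:ℂ) * ((x:ℂ) - (x₀:ℂ)))
          + derivWithin v (Icc a b) x₀ * Complex.sin ((k:ℂ) * ((x:ℂ) - (x₀:ℂ)))
      ∧ derivWithin v (Icc a b) x
          = derivWithin v (Icc a b) x₀ * Complex.cos ((k:ℂ) * ((x:ℂ) - (x₀:ℂ)))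
          - (k:ℂ) * v x₀ * Complex.sin ((k:ℂ) * ((x:ℂ) - (x₀:ℂ))) := by
  have hud : UniqueDiffOn ℝ (Icc a b) := uniqueDiffOn_Icc hab
  set W : ℝ → ℂ := derivWithin v (Icc a b) with hW
  have hknz : (k:ℂ) ≠ 0 := by exact_mod_cast hk.ne'
  set C : ℝ → ℂ := fun t => Complex.cos ((k:ℂ) * ((t:ℂ) - (x₀:ℂ))) with hC
  set S : ℝ → ℂ := fun t => Complex.sin ((k:ℂ) * ((t:ℂ) - (x₀:ℂ))) with hS
  -- derivatives of C and S
  have hinner : ∀ t : ℝ, HasDerivAt (fun z : ℂ => (k:ℂ) * (z - (x₀:ℂ))) (k:ℂ) ((t:ℝ):ℂ) := by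
    intro t
    simpa using (((hasDerivAt_id ((t:ℝ):ℂ)).sub_const ((x₀:ℝ):ℂ)).const_mul (k:ℂ))
  have hCd : ∀ t : ℝ, HasDerivAt C (-(k:ℂ) * S t) t := by
    intro t
    have h := (HasDerivAt.comp (h := fun z : ℂ => (k:ℂ) * (z - (x₀:ℂ))) (x := ((t:ℝ):ℂ))
      (Complex.hasDerivAt_cos ((k:ℂ) * (((t:ℝ):ℂ) - (x₀:ℂ)))) (hinner t)).comp_ofReal
    simpa [hC, hS, mul_comm, neg_mul, mul_neg] using h
  have hSd : ∀ t : ℝ, HasDerivAt S ((k:ℂ) * C t) t := by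
    intro t
    have h := (HasDerivAt.comp (h := fun z : ℂ => (k:ℂ) * (z - (x₀:ℂ))) (x := ((t:ℝ):ℂ))
      (Complex.hasDerivAt_sin ((k:ℂ) * (((t:ℝ):ℂ) - (x₀:ℂ)))) (hinner t)).comp_ofReal
    simpa [hC, hS, mul_comm] using h
  have hCc : ContinuousOn C (Icc a b) :=
    (Complex.continuous_cos.comp (by continuity)).continuousOn
  have hSc : ContinuousOn S (Icc a b) :=
    (Complex.continuous_sin.comp (by continuity)).continuousOn
  -- regularity of v and W
  have hvc : ContinuousOn v (Icc a b) := hv.continuousOn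
  have hW1 : ContDiffOn ℝ 1 W (Icc a b) := hv.derivWithin hud (by norm_num)
  have hWc : ContinuousOn W (Icc a b) := hW1.continuousOn
  have hvd : ∀ x ∈ Ioo a b, HasDerivAt v (W x) x := by
    intro x hx
    exact ((hv.differentiableOn (by norm_num) x (Ioo_subset_Icc_self hx)).hasDerivWithinAt).hasDerivAt
      (Icc_mem_nhds hx.1 hx.2)
  have hWd : ∀ x ∈ Ioo a b, HasDerivAt W (-(k:ℂ)^2 * v x) x := by
    intro x hx
    have hxI : x ∈ Icc a b := Ioo_subset_Icc_self hx
    have h1 : HasDerivAt W (derivWithin W (Icc a b) x) x :=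
      ((hW1.differentiableOn one_ne_zero x hxI).hasDerivWithinAt).hasDerivAt (Icc_mem_nhds hx.1 hx.2)
    have h2 : derivWithin W (Icc a b) x = iteratedDerivWithin 2 v (Icc a b) x := by
      rw [iteratedDerivWithin_succ]
      refine (derivWithin_congr (fun y hy => ?_) ?_).symm
      · exact congrFun iteratedDerivWithin_one y
      · exact congrFun iteratedDerivWithin_one x
    have h3 : iteratedDerivWithin 2 v (Icc a b) x = -(k:ℂ)^2 * v x := by
      have := heq x hx; linear_combination this
    rw [h2, h3] at h1; exact h1
  -- the two conserved quantities
  set p : ℝ → ℂ := fun t => (k:ℂ) * v t * C t - W t * S t with hp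
  set q : ℝ → ℂ := fun t => (k:ℂ) * v t * S t + W t * C t with hq
  have hpc : ContinuousOn p (Icc a b) :=
    (((continuousOn_const.mul hvc).mul hCc).sub (hWc.mul hSc))
  have hqc : ContinuousOn q (Icc a b) :=
    (((continuousOn_const.mul hvc).mul hSc).add (hWc.mul hCc))
  have hpd : ∀ x ∈ Ioo a b, HasDerivAt p 0 x := by
    intro x hx
    have h := ((((hvd x hx).const_mul (k:ℂ)).mul (hCd x)).sub ((hWd x hx).mul (hSd x)))
    convert h using 1
    · rfl
    · rfl
    ring
  have hqd : ∀ x ∈ Ioo a b, HasDerivAt q 0 x := by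
    intro x hx
    have h := ((((hvd x hx).const_mul (k:ℂ)).mul (hSd x)).add ((hWd x hx).mul (hCd x)))
    convert h using 1
    · rfl
    · rfl
    ring
  have hpconst := const_on_Icc_of_deriv_zero hab hpc hpd
  have hqconst := const_on_Icc_of_deriv_zero hab hqc hqd
  intro x hx
  have hpx : p x = p x₀ := hpconst x hx x₀ hx₀
  have hqx : q x = q x₀ := hqconst x hx x₀ hx₀
  have hCx0 : C x₀ = 1 := by simp [hC]
  have hSx0 : S x₀ = 0 := by simp [hS]
  simp only [hp, hq, hCx0, hSx0, mul_one, mul_zero, sub_zero, add_zero, zero_add] at hpx hqx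
  have pyth : C x ^ 2 + S x ^ 2 = 1 := by
    simpa [hC, hS] using Complex.cos_sq_add_sin_sq ((k:ℂ) * (((x:ℝ):ℂ) - (x₀:ℂ)))
  constructor
  · linear_combination C x * hpx + S x * hqx - (k:ℂ) * v x * pyth
  · linear_combination C x * hqx - S x * hpx - W x * pyth


lemma det_ne_aux (c₁ s₁ c₂ s₂ A B P Q : ℝ) (hA : 0 < A) (hB : 0 < B)
    (hP : 0 < P) (hQ : 0 < Q)
    (p₁ : s₁ ^ 2 + c₁ ^ 2 = 1) (p₂ : s₂ ^ 2 + c₂ ^ 2 = 1)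
    (hX : A * (c₁ * s₂) - B * (s₁ * c₂) = 0)
    (hY : 2 * P * (c₁ * c₂) + Q * (s₁ * s₂) = 0) : False := by
  have e1 : A * (c₁ * s₂) ^ 2 = B * (s₁ * c₂) * (c₁ * s₂) := by
    linear_combination (c₁ * s₂) * hX
  have e2 : A * (c₁ * s₂) * (s₁ * c₂) = B * (s₁ * c₂) ^ 2 := by
    linear_combination (s₁ * c₂) * hX
  have e3 : Q * (s₁ * s₂) * (c₁ * c₂) = -(2 * P * (c₁ * c₂) ^ 2) := by
    linear_combination (c₁ * c₂) * hY
  have big : Q * A * (c₁ * s₂) ^ 2 + Q * B * (s₁ * c₂) ^ 2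
      + 2 * P * (A + B) * (c₁ * c₂) ^ 2 = 0 := by
    linear_combination Q * e1 - Q * e2 + (A + B) * e3
  have hQA : 0 < Q * A := mul_pos hQ hA
  have hQB : 0 < Q * B := mul_pos hQ hB
  have hPAB : 0 < 2 * P * (A + B) := by positivity
  have hu : c₁ * s₂ = 0 := by
    by_contra hne
    have h2 : 0 < (c₁ * s₂) ^ 2 := by positivity
    nlinarith [mul_pos hQA h2, mul_nonneg hQB.le (sq_nonneg (s₁ * c₂)),
      mul_nonneg hPAB.le (sq_nonneg (c₁ * c₂))]
  have hw : s₁ * c₂ = 0 := by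
    by_contra hne
    have h2 : 0 < (s₁ * c₂) ^ 2 := by positivity
    nlinarith [mul_pos hQB h2, mul_nonneg hQA.le (sq_nonneg (c₁ * s₂)),
      mul_nonneg hPAB.le (sq_nonneg (c₁ * c₂))]
  have hcc : c₁ * c₂ = 0 := by
    by_contra hne
    have h2 : 0 < (c₁ * c₂) ^ 2 := by positivity
    nlinarith [mul_pos hPAB h2, mul_nonneg hQA.le (sq_nonneg (c₁ * s₂)),
      mul_nonneg hQB.le (sq_nonneg (s₁ * c₂))]
  have hss : s₁ * s₂ = 0 := by
    have : Q * (s₁ * s₂) = 0 := by linear_combination hY - 2 * P * hcc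
    exact (mul_eq_zero.mp this).resolve_left hQ.ne'
  have key : (1 : ℝ) = (s₁ * s₂) ^ 2 + (s₁ * c₂) ^ 2 + (c₁ * s₂) ^ 2 + (c₁ * c₂) ^ 2 := by
    linear_combination (-(s₂ ^ 2 + c₂ ^ 2)) * p₁ - p₂
  rw [hu, hw, hcc, hss] at key
  norm_num at key


theorem ddm_1d_transmission_uniqueness
    (η k₁ k₂ ε₁ ε₂ c : ℝ) (hη : 0 < η) (hk₁ : 0 < k₁) (hk₂ : 0 < k₂)
    (hε₁ : 0 < ε₁) (hε₂ : 0 < ε₂) (hc : c ∈ Ioo (0 : ℝ) 1)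
    (v₁ v₂ : ℝ → ℂ)
    (hv₁ : ContDiffOn ℝ 2 v₁ (Icc 0 c)) (hv₂ : ContDiffOn ℝ 2 v₂ (Icc c 1))
    (heq₁ : ∀ x ∈ Ioo 0 c,
      iteratedDerivWithin 2 v₁ (Icc 0 c) x + (k₁ : ℂ) ^ 2 * v₁ x = 0)
    (heq₂ : ∀ x ∈ Ioo c 1,
      iteratedDerivWithin 2 v₂ (Icc c 1) x + (k₂ : ℂ) ^ 2 * v₂ x = 0)
    (hmatch₁ : (ε₁ : ℂ)⁻¹ * derivWithin v₁ (Icc 0 c) c + Complex.I * (η : ℂ) * v₁ c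
      = (ε₂ : ℂ)⁻¹ * (-derivWithin v₂ (Icc c 1) c) - Complex.I * (η : ℂ) * v₂ c)
    (hmatch₂ : (ε₁ : ℂ)⁻¹ * derivWithin v₁ (Icc 0 c) c - Complex.I * (η : ℂ) * v₁ c
      = (ε₂ : ℂ)⁻¹ * (-derivWithin v₂ (Icc c 1) c) + Complex.I * (η : ℂ) * v₂ c)
    (hbc₀ : -(ε₁ : ℂ)⁻¹ * derivWithin v₁ (Icc 0 c) 0 - Complex.I * (η : ℂ) * v₁ 0 = 0)
    (hbc₁ : (ε₂ : ℂ)⁻¹ * derivWithin v₂ (Icc c 1) 1 - Complex.I * (η : ℂ) * v₂ 1 = 0) :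
    (∀ x ∈ Icc 0 c, v₁ x = 0) ∧ (∀ x ∈ Icc c 1, v₂ x = 0) := by
  obtain ⟨hc0, hc1⟩ := hc
  have hk₁c : (k₁ : ℂ) ≠ 0 := by exact_mod_cast hk₁.ne'
  have hk₂c : (k₂ : ℂ) ≠ 0 := by exact_mod_cast hk₂.ne'
  have hηc : (η : ℂ) ≠ 0 := by exact_mod_cast hη.ne'
  set f₁ : ℝ := ε₁⁻¹ with hf₁def
  set f₂ : ℝ := ε₂⁻¹ with hf₂def
  have hf₁ : 0 < f₁ := inv_pos.2 hε₁
  have hf₂ : 0 < f₂ := inv_pos.2 hε₂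
  have hfc₁ : ((ε₁ : ℂ))⁻¹ = (f₁ : ℂ) := by rw [hf₁def]; push_cast; ring
  have hfc₂ : ((ε₂ : ℂ))⁻¹ = (f₂ : ℂ) := by rw [hf₂def]; push_cast; ring
  rw [hfc₁] at hmatch₁ hmatch₂ hbc₀
  rw [hfc₂] at hmatch₁ hmatch₂ hbc₁
  -- representation of solutions
  have rep₁ := ode_rep hk₁ hc0 (left_mem_Icc.mpr hc0.le) hv₁ heq₁
  have rep₂ := ode_rep hk₂ hc1 (right_mem_Icc.mpr hc1.le) hv₂ heq₂
  set c₁ : ℝ := Real.cos (k₁ * c) with hc₁def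
  set s₁ : ℝ := Real.sin (k₁ * c) with hs₁def
  set c₂ : ℝ := Real.cos (k₂ * (c - 1)) with hc₂def
  set s₂ : ℝ := Real.sin (k₂ * (c - 1)) with hs₂def
  have hcast₁ : (k₁ : ℂ) * ((c : ℂ) - (((0:ℝ) : ℝ) : ℂ)) = ((k₁ * c : ℝ) : ℂ) := by
    push_cast; ring
  have hcast₂ : (k₂ : ℂ) * ((c : ℂ) - (((1:ℝ) : ℝ) : ℂ)) = ((k₂ * (c - 1) : ℝ) : ℂ) := by
    push_cast; ring
  obtain ⟨hval₁, hder₁⟩ := rep₁ c (right_mem_Icc.mpr hc0.le)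
  obtain ⟨hval₂, hder₂⟩ := rep₂ c (left_mem_Icc.mpr hc1.le)
  rw [hcast₁, ← Complex.ofReal_cos, ← Complex.ofReal_sin, ← hc₁def, ← hs₁def] at hval₁ hder₁
  rw [hcast₂, ← Complex.ofReal_cos, ← Complex.ofReal_sin, ← hc₂def, ← hs₂def] at hval₂ hder₂
  set P₁ : ℂ := v₁ 0 with hP₁def
  set R₁ : ℂ := derivWithin v₁ (Icc 0 c) 0 with hR₁def
  set P₂ : ℂ := v₂ 1 with hP₂def
  set R₂ : ℂ := derivWithin v₂ (Icc c 1) 1 with hR₂def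
  -- the four linear equations
  have h1 : (f₁ : ℂ) * R₁ + Complex.I * η * P₁ = 0 := by linear_combination -hbc₀
  have h2 : (f₂ : ℂ) * R₂ - Complex.I * η * P₂ = 0 := by linear_combination hbc₁
  have hsum : (f₁ : ℂ) * derivWithin v₁ (Icc 0 c) c
      + (f₂ : ℂ) * derivWithin v₂ (Icc c 1) c = 0 := by
    linear_combination (1/2 : ℂ) * hmatch₁ + (1/2 : ℂ) * hmatch₂
  have hdiffI : Complex.I * (η : ℂ) * (v₁ c + v₂ c) = 0 := by
    linear_combination (1/2 : ℂ) * hmatch₁ - (1/2 : ℂ) * hmatch₂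
  have hdiff : v₁ c + v₂ c = 0 := by
    simpa [Complex.I_ne_zero, hηc, mul_eq_zero] using hdiffI
  rw [hder₁, hder₂] at hsum
  have h4 : (k₂ : ℂ) * ((k₁ : ℂ) * v₁ c) + (k₁ : ℂ) * ((k₂ : ℂ) * v₂ c) = 0 := by
    linear_combination ((k₁ : ℂ) * (k₂ : ℂ)) * hdiff
  rw [hval₁, hval₂] at h4
  -- elimination: P₁ * D = 0
  set X : ℝ := f₁ * k₁ * (η ^ 2 + f₂ ^ 2 * k₂ ^ 2) * (c₁ * s₂)
      - f₂ * k₂ * (η ^ 2 + f₁ ^ 2 * k₁ ^ 2) * (s₁ * c₂) with hXdef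
  set Y : ℝ := -(η * (2 * (f₁ * f₂ * k₁ * k₂) * (c₁ * c₂)
      + (f₁ ^ 2 * k₁ ^ 2 + f₂ ^ 2 * k₂ ^ 2) * (s₁ * s₂))) with hYdef
  have hD : P₁ * ((X : ℂ) + (Y : ℂ) * Complex.I) = 0 := by
    rw [hXdef, hYdef]
    push_cast
    linear_combination
        (-((f₁:ℂ) * k₁ * ((f₂:ℂ) * k₂ * c₂ + Complex.I * η * s₂)) * c₁
          + (Complex.I * η * c₂ - (f₂:ℂ) * k₂ * s₂) * k₂ * s₁ * f₂) * h1
      + (-((f₁:ℂ) * k₁ * ((f₂:ℂ) * k₂ * c₂ + Complex.I * η * s₂)) * c₂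
          + (Complex.I * η * c₂ - (f₂:ℂ) * k₂ * s₂) * k₁ * s₂ * f₁) * h2
      + ((f₁:ℂ) * k₁ * ((f₂:ℂ) * k₂ * c₂ + Complex.I * η * s₂)) * hsum
      + (-((Complex.I * η * c₂ - (f₂:ℂ) * k₂ * s₂) * f₁ * f₂)) * h4
      + (P₁ * (η:ℂ) ^ 2 * ((k₁:ℂ) * f₁ * c₁ * s₂ - (k₂:ℂ) * f₂ * s₁ * c₂)) * Complex.I_sq
  -- D ≠ 0
  have pyth₁ : s₁ ^ 2 + c₁ ^ 2 = 1 := Real.sin_sq_add_cos_sq (k₁ * c)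
  have pyth₂ : s₂ ^ 2 + c₂ ^ 2 = 1 := Real.sin_sq_add_cos_sq (k₂ * (c - 1))
  have hDne : ((X : ℂ) + (Y : ℂ) * Complex.I) ≠ 0 := by
    intro h0
    rw [Complex.ext_iff] at h0
    simp only [Complex.add_re, Complex.add_im, Complex.ofReal_re, Complex.ofReal_im,
      Complex.mul_re, Complex.mul_im, Complex.I_re, Complex.I_im, Complex.zero_re,
      Complex.zero_im, mul_zero, mul_one, zero_mul, add_zero, zero_add, sub_zero] at h0
    obtain ⟨hX0, hY0⟩ := h0
    have hY0' : 2 * (f₁ * f₂ * k₁ * k₂) * (c₁ * c₂)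
        + (f₁ ^ 2 * k₁ ^ 2 + f₂ ^ 2 * k₂ ^ 2) * (s₁ * s₂) = 0 := by
      rw [hYdef] at hY0
      have hY0'' : η * (2 * (f₁ * f₂ * k₁ * k₂) * (c₁ * c₂)
          + (f₁ ^ 2 * k₁ ^ 2 + f₂ ^ 2 * k₂ ^ 2) * (s₁ * s₂)) = 0 := by linarith
      exact (mul_eq_zero.mp hY0'').resolve_left hη.ne' 
    refine det_ne_aux c₁ s₁ c₂ s₂ (f₁ * k₁ * (η ^ 2 + f₂ ^ 2 * k₂ ^ 2))
      (f₂ * k₂ * (η ^ 2 + f₁ ^ 2 * k₁ ^ 2)) (f₁ * f₂ * k₁ * k₂)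
      (f₁ ^ 2 * k₁ ^ 2 + f₂ ^ 2 * k₂ ^ 2) (by positivity) (by positivity)
      (by positivity) (by positivity) pyth₁ pyth₂ ?_ hY0'
    rw [hXdef] at hX0
    linarith [hX0]
  have hP₁0 : P₁ = 0 := by
    rcases mul_eq_zero.mp hD with h | h
    · exact h
    · exact absurd h hDne
  have hR₁0 : R₁ = 0 := by
    have : (f₁ : ℂ) * R₁ = 0 := by rw [hP₁0] at h1; linear_combination h1
    rcases mul_eq_zero.mp this with h | h
    · exact absurd h (by exact_mod_cast hf₁.ne')
    · exact h
  have hP₂0 : P₂ = 0 := by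
    have hkey : (k₁ : ℂ) * (P₂ * (((k₂ * f₂ * c₂ : ℝ) : ℂ) + ((η * s₂ : ℝ) : ℂ) * Complex.I)) = 0 := by
      push_cast
      linear_combination (f₂ : ℂ) * h4 - (s₂ : ℂ) * k₁ * h2
        - (f₂ : ℂ) * k₂ * k₁ * c₁ * hP₁0 - (f₂ : ℂ) * k₂ * s₁ * hR₁0
    have hz : (((k₂ * f₂ * c₂ : ℝ) : ℂ) + ((η * s₂ : ℝ) : ℂ) * Complex.I) ≠ 0 := by
      intro h0
      rw [Complex.ext_iff] at h0
      simp only [Complex.add_re, Complex.add_im, Complex.ofReal_re, Complex.ofReal_im,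
        Complex.mul_re, Complex.mul_im, Complex.I_re, Complex.I_im, Complex.zero_re,
        Complex.zero_im, mul_zero, mul_one, zero_mul, add_zero, zero_add, sub_zero] at h0
      obtain ⟨ha, hb⟩ := h0
      have hc₂0 : c₂ = 0 := by
        have := mul_eq_zero.mp ha
        rcases this with h | h
        · rcases mul_eq_zero.mp h with h' | h'
          · exact absurd h' hk₂.ne'
          · exact absurd h' hf₂.ne'
        · exact h
      have hs₂0 : s₂ = 0 := (mul_eq_zero.mp hb).resolve_left hη.ne'
      rw [hc₂0, hs₂0] at pyth₂
      norm_num at pyth₂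
    rcases mul_eq_zero.mp hkey with h | h
    · exact absurd h hk₁c
    · exact (mul_eq_zero.mp h).resolve_right hz
  have hR₂0 : R₂ = 0 := by
    have : (f₂ : ℂ) * R₂ = 0 := by rw [hP₂0] at h2; linear_combination h2
    rcases mul_eq_zero.mp this with h | h
    · exact absurd h (by exact_mod_cast hf₂.ne')
    · exact h
  constructor
  · intro x hx
    have hx0 : (k₁ : ℂ) * v₁ x = 0 := by
      rw [(rep₁ x hx).1, hP₁0, hR₁0]; ring
    exact (mul_eq_zero.mp hx0).resolve_left hk₁c
  · intro x hx
    have hx0 : (k₂ : ℂ) * v₂ x = 0 := by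
      rw [(rep₂ x hx).1, hP₂0, hR₂0]; ring
    exact (mul_eq_zero.mp hx0).resolve_left hk₂c
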